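/- Let m > 1, σ > 0, let ν be the Gaussian measure on ℝ with mean m and variance σ², and let S = [1, 2m−1]. Write E_S[g] = (∫_S g(x) dν(x)) / ν(S) for the conditional expectation given S. Then for every natural number k ≥ 0, the weighted tail of the series of conditional even moments satisfies ∑_{j=k+1}^{∞} (2j+1) · E_S[((x−m)/m)^{2j}] ≤ [ (2k+3) m²/(2m−1) + 2 m² (m−1)²/(2m−1)² ] · E_S[((x−m)/m)^{2k+2}]. -/

import Mathlib

open MeasureTheory ProbabilityTheory Real Set

/-- Weighted tail bound for the series of conditional even moments of `(X−m)/m` given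
`S = [1, 2m−1]`: `∑_{j=k+1}^∞ (2j+1) E_S[((x−m)/m)^{2j}]
  ≤ ((2k+3) m²/(2m−1) + 2 m² (m−1)²/(2m−1)²) E_S[((x−m)/m)^{2k+2}]`. -/
theorem weighted_tail_conditional_even_moments_le (m σ : ℝ) (hm : 1 < m) (hσ : 0 < σ) (k : ℕ) :
    (∑' j : ℕ,
        (2 * ((j : ℝ) + k + 1) + 1) *
          ((∫ x in Icc 1 (2 * m - 1), ((x - m) / m) ^ (2 * (j + k + 1))
              ∂(gaussianReal m ⟨σ ^ 2, sq_nonneg σ⟩)) /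
            ((gaussianReal m ⟨σ ^ 2, sq_nonneg σ⟩) (Icc 1 (2 * m - 1))).toReal)) ≤
      ((2 * (k : ℝ) + 3) * m ^ 2 / (2 * m - 1) +
          2 * m ^ 2 * (m - 1) ^ 2 / (2 * m - 1) ^ 2) *
        ((∫ x in Icc 1 (2 * m - 1), ((x - m) / m) ^ (2 * k + 2)
            ∂(gaussianReal m ⟨σ ^ 2, sq_nonneg σ⟩)) /
          ((gaussianReal m ⟨σ ^ 2, sq_nonneg σ⟩) (Icc 1 (2 * m - 1))).toReal) := by
  set ν := gaussianReal m ⟨σ ^ 2, sq_nonneg σ⟩ with hν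
  have hm0 : (0:ℝ) < m := lt_trans one_pos hm
  have h2m : (0:ℝ) < 2 * m - 1 := by linarith
  set q : ℝ := ((m - 1) / m) ^ 2 with hq
  have hq0 : 0 ≤ q := sq_nonneg _
  have hr1 : (m - 1) / m < 1 := by rw [div_lt_one hm0]; linarith
  have hr0 : 0 ≤ (m - 1) / m := div_nonneg (by linarith) hm0.le
  have hq1 : q < 1 := by rw [hq]; nlinarith
  have hInt : ∀ n : ℕ, IntegrableOn (fun x => ((x - m) / m) ^ n) (Icc 1 (2 * m - 1)) ν := by
    intro n
    haveI : IsProbabilityMeasure ν := instIsProbabilityMeasureGaussianReal m _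
    haveI : IsFiniteMeasureOnCompacts ν := isFiniteMeasureOnCompacts_of_isLocallyFiniteMeasure
    exact (Continuous.integrableOn_Icc (by continuity))
  have hI0 : 0 ≤ ∫ x in Icc 1 (2 * m - 1), ((x - m) / m) ^ (2 * k + 2) ∂ν := by
    apply setIntegral_nonneg measurableSet_Icc
    intro x _
    exact Even.pow_nonneg ⟨k + 1, by ring⟩ _
  set E : ℝ := (∫ x in Icc 1 (2 * m - 1), ((x - m) / m) ^ (2 * k + 2) ∂ν) /
      (ν (Icc 1 (2 * m - 1))).toReal with hE
  have hE0 : 0 ≤ E := div_nonneg hI0 ENNReal.toReal_nonneg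
  have key : ∀ j : ℕ, (∫ x in Icc 1 (2 * m - 1), ((x - m) / m) ^ (2 * (j + k + 1)) ∂ν)
      ≤ q ^ j * ∫ x in Icc 1 (2 * m - 1), ((x - m) / m) ^ (2 * k + 2) ∂ν := by
    intro j
    rw [← integral_const_mul]
    apply setIntegral_mono_on (hInt _) ((hInt _).const_mul _) measurableSet_Icc
    intro x hx
    have hx1 : ((x - m) / m) ^ 2 ≤ q := by
      rw [hq]
      apply sq_le_sq'
      · rw [← neg_div]
        exact div_le_div_of_nonneg_right (by linarith [hx.1]) hm0.le
      · exact div_le_div_of_nonneg_right (by linarith [hx.2]) hm0.le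
    calc ((x - m) / m) ^ (2 * (j + k + 1))
        = (((x - m) / m) ^ 2) ^ j * ((x - m) / m) ^ (2 * k + 2) := by
          rw [← pow_mul, ← pow_add]; ring_nf
      _ ≤ q ^ j * ((x - m) / m) ^ (2 * k + 2) := by
          exact mul_le_mul_of_nonneg_right (pow_le_pow_left₀ (sq_nonneg _) hx1 j)
            (Even.pow_nonneg ⟨k + 1, by ring⟩ _)
  have hqn : ‖q‖ < 1 := by rwa [Real.norm_eq_abs, abs_of_nonneg hq0]
  set c : ℕ → ℝ := fun j => (2 * ((j : ℝ) * q ^ j) + (2 * (k : ℝ) + 3) * q ^ j) * E with hc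
  have hsumc : Summable c := by
    apply Summable.mul_right
    exact ((((hasSum_coe_mul_geometric_of_norm_lt_one hqn).summable).mul_left 2).add
      ((summable_geometric_of_lt_one hq0 hq1).mul_left _))
  have hterm : ∀ j : ℕ,
      (2 * ((j : ℝ) + k + 1) + 1) *
        ((∫ x in Icc 1 (2 * m - 1), ((x - m) / m) ^ (2 * (j + k + 1)) ∂ν) /
          (ν (Icc 1 (2 * m - 1))).toReal) ≤ c j := by
    intro j
    have h1 : (∫ x in Icc 1 (2 * m - 1), ((x - m) / m) ^ (2 * (j + k + 1)) ∂ν) /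
        (ν (Icc 1 (2 * m - 1))).toReal ≤ q ^ j * E := by
      rw [hE, div_eq_mul_inv, div_eq_mul_inv, ← mul_assoc]
      exact mul_le_mul_of_nonneg_right (key j) (inv_nonneg.2 ENNReal.toReal_nonneg)
    calc (2 * ((j : ℝ) + k + 1) + 1) *
        ((∫ x in Icc 1 (2 * m - 1), ((x - m) / m) ^ (2 * (j + k + 1)) ∂ν) /
          (ν (Icc 1 (2 * m - 1))).toReal)
        ≤ (2 * ((j : ℝ) + k + 1) + 1) * (q ^ j * E) :=
          mul_le_mul_of_nonneg_left h1 (by positivity)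
      _ = c j := by rw [hc]; ring
  have hnn : ∀ j : ℕ, 0 ≤ (2 * ((j : ℝ) + k + 1) + 1) *
      ((∫ x in Icc 1 (2 * m - 1), ((x - m) / m) ^ (2 * (j + k + 1)) ∂ν) /
        (ν (Icc 1 (2 * m - 1))).toReal) := by
    intro j
    apply mul_nonneg (by positivity)
    apply div_nonneg _ ENNReal.toReal_nonneg
    apply setIntegral_nonneg measurableSet_Icc
    intro x _
    exact Even.pow_nonneg ⟨j + k + 1, by ring⟩ _
  have hsuma : Summable fun j : ℕ =>
      (2 * ((j : ℝ) + k + 1) + 1) *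
        ((∫ x in Icc 1 (2 * m - 1), ((x - m) / m) ^ (2 * (j + k + 1)) ∂ν) /
          (ν (Icc 1 (2 * m - 1))).toReal) :=
    Summable.of_nonneg_of_le hnn hterm hsumc
  have htsumc : ∑' j, c j = ((2 * (k : ℝ) + 3) * m ^ 2 / (2 * m - 1) +
      2 * m ^ 2 * (m - 1) ^ 2 / (2 * m - 1) ^ 2) * E := by
    rw [tsum_mul_right]
    rw [Summable.tsum_add (((hasSum_coe_mul_geometric_of_norm_lt_one hqn).summable).mul_left 2)
      ((summable_geometric_of_lt_one hq0 hq1).mul_left _)]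
    rw [tsum_mul_left, tsum_mul_left, tsum_coe_mul_geometric_of_norm_lt_one hqn,
      tsum_geometric_of_lt_one hq0 hq1]
    have h1q : 1 - q = (2 * m - 1) / m ^ 2 := by
      rw [hq]; field_simp; ring
    rw [h1q, hq]
    rw [div_pow]
    field_simp
    ring
  calc _ ≤ ∑' j, c j := Summable.tsum_le_tsum hterm hsuma hsumc
    _ = _ := htsumc
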